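/- Let G be a temporal graph with Δ₂ > Δ₁ > 1 consisting of vertices {a,b,c,d,e} with time-edges (ab,2), (ac,1), (bc,1), (cd,Δ₂+2), (ce,Δ₂+2), (de,Δ₂+1). Then G is not a (Δ₁,Δ₂)-cluster temporal graph, but for every subset S of at most 4 vertices, G[S] is a (Δ₁,Δ₂)-cluster temporal graph. -/

import Mathlib

/-- A time-edge: an (undirected) edge together with a time label. -/
abbrev TimeEdge := Sym2 ℕ × ℕ

/-- Vertices appearing in a set of time-edges. -/
def verts (S : Set TimeEdge) : Set ℕ := {v | ∃ te ∈ S, v ∈ te.1}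

/-- Times appearing in a set of time-edges. -/
def times (S : Set TimeEdge) : Set ℕ := Prod.snd '' S

/-- The lifetime interval of a set of time-edges. -/
def lifetime (S : Set TimeEdge) : Set ℕ := Set.Icc (sInf (times S)) (sSup (times S))

/-- Two sets of time-edges are Δ₂-independent if their vertex sets are disjoint or
their lifetime intervals are at temporal distance at least Δ₂. -/
def Indep (Δ₂ : ℕ) (S₁ S₂ : Set TimeEdge) : Prop :=
  Disjoint (verts S₁) (verts S₂) ∨
    ∀ s ∈ lifetime S₁, ∀ t ∈ lifetime S₂, Δ₂ ≤ max s t - min s t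

/-- A set of time-edges is Δ₂-indivisible if it cannot be partitioned into two or more
nonempty pairwise Δ₂-independent subsets. -/
def Indivisible (Δ₂ : ℕ) (S : Set TimeEdge) : Prop :=
  ¬ ∃ P : Set (Set TimeEdge), P.Nontrivial ∧ (∀ A ∈ P, A.Nonempty) ∧
      ⋃₀ P = S ∧ P.PairwiseDisjoint id ∧ P.Pairwise (Indep Δ₂)

/-- The edge `e` is Δ₁-dense in `[a,b]` with respect to the time-edge set `S`. -/
def DenseIn (S : Set TimeEdge) (Δ₁ : ℕ) (e : Sym2 ℕ) (a b : ℕ) : Prop :=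
  ∀ τ ∈ Set.Icc a (max a (b + 1 - Δ₁)), ∃ t, t ∈ Set.Icc τ (τ + Δ₁ - 1) ∧ (e, t) ∈ S

/-- A set of time-edges forms a Δ₁-temporal clique if every pair of its vertices is
joined by an edge Δ₁-dense in its lifetime. -/
def IsTemporalClique (Δ₁ : ℕ) (K : Set TimeEdge) : Prop :=
  ∀ x ∈ verts K, ∀ y ∈ verts K, x ≠ y →
    DenseIn K Δ₁ s(x, y) (sInf (times K)) (sSup (times K))

/-- A (Δ₁,Δ₂)-cluster temporal graph: the time-edges partition into pairwise
Δ₂-independent Δ₁-temporal cliques. -/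
def IsClusterTemporalGraph (Δ₁ Δ₂ : ℕ) (E : Set TimeEdge) : Prop :=
  ∃ P : Set (Set TimeEdge), ⋃₀ P = E ∧ P.PairwiseDisjoint id ∧
    (∀ K ∈ P, IsTemporalClique Δ₁ K) ∧ P.Pairwise (Indep Δ₂)

/-- A Δ₂-saturated set of time-edges in `E`: a Δ₂-indivisible subset of `E` such that
adding any other time-edge of `E` destroys indivisibility. -/
def Saturated (Δ₂ : ℕ) (E S : Set TimeEdge) : Prop :=
  S ⊆ E ∧ Indivisible Δ₂ S ∧ ∀ te ∈ E, te ∉ S → ¬ Indivisible Δ₂ (insert te S)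

/-- The induced temporal subgraph on a vertex set `A`. -/
def induced (E : Set TimeEdge) (A : Set ℕ) : Set TimeEdge :=
  {te ∈ E | ∀ v ∈ te.1, v ∈ A}

/-- Two single time-edges are Δ-independent. -/
def TEIndep (Δ : ℕ) (te₁ te₂ : TimeEdge) : Prop :=
  (∀ v ∈ te₁.1, v ∉ te₂.1) ∨ Δ ≤ max te₁.2 te₂.2 - min te₁.2 te₂.2


lemma mem_times' {S : Set TimeEdge} {te : TimeEdge} (h : te ∈ S) : te.2 ∈ times S :=
  ⟨te, h, rfl⟩

lemma sInf_eq' {S : Set ℕ} {m : ℕ} (h1 : m ∈ S) (h2 : ∀ x ∈ S, m ≤ x) : sInf S = m :=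
  le_antisymm (Nat.sInf_le h1) (le_csInf ⟨m, h1⟩ h2)

lemma sSup_eq' {S : Set ℕ} {M : ℕ} (h1 : M ∈ S) (h2 : ∀ x ∈ S, x ≤ M) : sSup S = M :=
  le_antisymm (csSup_le ⟨M, h1⟩ h2) (le_csSup ⟨M, h2⟩ h1)

lemma clique_exists_edge {Δ₁ : ℕ} {K : Set TimeEdge} (h : IsTemporalClique Δ₁ K)
    {x y : ℕ} (hx : x ∈ verts K) (hy : y ∈ verts K) (hxy : x ≠ y) :
    ∃ t, (s(x,y), t) ∈ K := by
  obtain ⟨t, _, ht⟩ := h x hx y hy hxy (sInf (times K)) ⟨le_rfl, le_max_left _ _⟩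
  exact ⟨t, ht⟩

lemma clique_subsingleton {Δ₁ : ℕ} (hΔ : 1 ≤ Δ₁) {K : Set TimeEdge}
    (h : K.Subsingleton) : IsTemporalClique Δ₁ K := by
  rintro x ⟨te, hte, hxte⟩ y ⟨te', hte', hyte⟩ hxy
  have hK : K = {te} := Set.eq_singleton_iff_unique_mem.mpr ⟨hte, fun z hz => h hz hte⟩
  obtain ⟨q, t⟩ := te
  obtain ⟨u, v, rfl⟩ : ∃ u v, q = s(u, v) := by
    obtain ⟨⟨u, v⟩, rfl⟩ := q.exists_rep; exact ⟨u, v, rfl⟩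
  · have h' := h hte' hte
    subst h'
    simp only [Sym2.mem_iff] at hxte hyte
    have hxy' : s(x, y) = s(u, v) := by
      rcases hxte with rfl | rfl <;> rcases hyte with rfl | rfl
      · exact absurd rfl hxy
      · rfl
      · exact Sym2.eq_swap
      · exact absurd rfl hxy
    subst hK
    have ht : times {((s(u,v), t) : TimeEdge)} = {t} := by
      simp [times]
    intro τ hτ
    rw [ht, csInf_singleton, csSup_singleton] at hτ
    have hmax : max t (t + 1 - Δ₁) = t := by omega
    rw [hmax] at hτ
    simp only [Set.mem_Icc] at hτ
    have heq : τ = t := le_antisymm hτ.2 hτ.1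
    exact ⟨t, ⟨heq.le, by omega⟩, by rw [hxy']; rfl⟩

lemma clique_of_short {Δ₁ m M : ℕ} {K : Set TimeEdge}
    (hm : sInf (times K) = m) (hM : sSup (times K) = M)
    (htimes : ∀ t ∈ times K, m ≤ t ∧ t ≤ M)
    (h : M + 1 ≤ m + Δ₁)
    (hedge : ∀ x ∈ verts K, ∀ y ∈ verts K, x ≠ y → ∃ t, (s(x,y), t) ∈ K) :
    IsTemporalClique Δ₁ K := by
  intro x hx y hy hxy τ hτ
  obtain ⟨t, ht⟩ := hedge x hx y hy hxy
  have htt := htimes t (mem_times' ht)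
  rw [hm, hM] at hτ
  have hmax : max m (M + 1 - Δ₁) = m := by omega
  rw [hmax] at hτ
  simp only [Set.mem_Icc] at hτ
  have : τ = m := le_antisymm hτ.2 hτ.1
  subst this
  exact ⟨t, ⟨htt.1, by omega⟩, ht⟩

lemma lifetime_bounds {S : Set TimeEdge} {m M : ℕ} (hne : S.Nonempty)
    (hb : ∀ t ∈ times S, m ≤ t ∧ t ≤ M) :
    ∀ s ∈ lifetime S, m ≤ s ∧ s ≤ M := by
  obtain ⟨te, hte⟩ := hne
  have hne' : (times S).Nonempty := ⟨te.2, mem_times' hte⟩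
  rintro s ⟨h1, h2⟩
  constructor
  · exact le_trans (le_csInf hne' fun t ht => (hb t ht).1) h1
  · exact le_trans h2 (csSup_le hne' fun t ht => (hb t ht).2)

lemma indep_symm {Δ₂ : ℕ} {X Y : Set TimeEdge} (h : Indep Δ₂ X Y) : Indep Δ₂ Y X := by
  rcases h with h | h
  · exact Or.inl h.symm
  · exact Or.inr fun s hs t ht => by rw [max_comm, min_comm]; exact h t ht s hs

def T1 : Set TimeEdge := {(s(0,1),2), (s(0,2),1), (s(1,2),1)}
def T2 (Δ₂ : ℕ) : Set TimeEdge := {(s(2,3),Δ₂+2), (s(2,4),Δ₂+2), (s(3,4),Δ₂+1)}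

lemma mem_verts_T1 {x : ℕ} : x ∈ verts T1 ↔ (x = 0 ∨ x = 1 ∨ x = 2) := by
  simp only [verts, T1, Set.mem_setOf_eq, Set.mem_insert_iff, Set.mem_singleton_iff]
  constructor
  · rintro ⟨te, (rfl | rfl | rfl), hx⟩ <;> simp [Sym2.mem_iff] at hx <;> tauto
  · rintro (rfl | rfl | rfl)
    · exact ⟨(s(0,1),2), by tauto, by decide⟩
    · exact ⟨(s(0,1),2), by tauto, by decide⟩
    · exact ⟨(s(0,2),1), by tauto, by decide⟩

lemma mem_verts_T2 {Δ₂ x : ℕ} : x ∈ verts (T2 Δ₂) ↔ (x = 2 ∨ x = 3 ∨ x = 4) := by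
  simp only [verts, T2, Set.mem_setOf_eq, Set.mem_insert_iff, Set.mem_singleton_iff]
  constructor
  · rintro ⟨te, (rfl | rfl | rfl), hx⟩ <;> simp [Sym2.mem_iff] at hx <;> tauto
  · rintro (rfl | rfl | rfl)
    · exact ⟨(s(2,3),Δ₂+2), by tauto, by simp⟩
    · exact ⟨(s(2,3),Δ₂+2), by tauto, by simp⟩
    · exact ⟨(s(2,4),Δ₂+2), by tauto, by simp⟩

lemma times_T1 {t : ℕ} (h : t ∈ times T1) : 1 ≤ t ∧ t ≤ 2 := by
  obtain ⟨te, hte, rfl⟩ := h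
  rcases hte with rfl | rfl | rfl <;> omega

lemma times_T2 {Δ₂ t : ℕ} (h : t ∈ times (T2 Δ₂)) : Δ₂ + 1 ≤ t ∧ t ≤ Δ₂ + 2 := by
  obtain ⟨te, hte, rfl⟩ := h
  rcases hte with rfl | rfl | rfl <;> omega

lemma clique_T1 {Δ₁ : ℕ} (h : 2 ≤ Δ₁) : IsTemporalClique Δ₁ T1 := by
  have h1 : (1 : ℕ) ∈ times T1 := ⟨(s(0,2),1), by right; left; rfl, rfl⟩
  have h2 : (2 : ℕ) ∈ times T1 := ⟨(s(0,1),2), by left; rfl, rfl⟩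
  refine clique_of_short (m := 1) (M := 2)
    (sInf_eq' h1 fun x hx => (times_T1 hx).1)
    (sSup_eq' h2 fun x hx => (times_T1 hx).2)
    (fun t ht => times_T1 ht) (by omega) ?_
  intro x hx y hy hxy
  rw [mem_verts_T1] at hx hy
  rcases hx with rfl | rfl | rfl <;> rcases hy with rfl | rfl | rfl <;>
    first
      | exact absurd rfl hxy
      | exact ⟨2, by left; rfl⟩
      | exact ⟨1, by right; left; rfl⟩
      | exact ⟨1, by right; right; rfl⟩
      | exact ⟨2, by rw [Sym2.eq_swap]; left; rfl⟩
      | exact ⟨1, by rw [Sym2.eq_swap]; right; left; rfl⟩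
      | exact ⟨1, by rw [Sym2.eq_swap]; right; right; rfl⟩

lemma clique_T2 {Δ₁ Δ₂ : ℕ} (h : 2 ≤ Δ₁) : IsTemporalClique Δ₁ (T2 Δ₂) := by
  have h1 : (Δ₂ + 1 : ℕ) ∈ times (T2 Δ₂) := ⟨(s(3,4),Δ₂+1), by right; right; rfl, rfl⟩
  have h2 : (Δ₂ + 2 : ℕ) ∈ times (T2 Δ₂) := ⟨(s(2,3),Δ₂+2), by left; rfl, rfl⟩
  refine clique_of_short (m := Δ₂ + 1) (M := Δ₂ + 2)
    (sInf_eq' h1 fun x hx => (times_T2 hx).1)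
    (sSup_eq' h2 fun x hx => (times_T2 hx).2)
    (fun t ht => times_T2 ht) (by omega) ?_
  intro x hx y hy hxy
  rw [mem_verts_T2] at hx hy
  rcases hx with rfl | rfl | rfl <;> rcases hy with rfl | rfl | rfl <;>
    first
      | exact absurd rfl hxy
      | exact ⟨Δ₂+2, by left; rfl⟩
      | exact ⟨Δ₂+2, by right; left; rfl⟩
      | exact ⟨Δ₂+1, by right; right; rfl⟩
      | exact ⟨Δ₂+2, by rw [Sym2.eq_swap]; left; rfl⟩
      | exact ⟨Δ₂+2, by rw [Sym2.eq_swap]; right; left; rfl⟩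
      | exact ⟨Δ₂+1, by rw [Sym2.eq_swap]; right; right; rfl⟩

lemma mem_induced_T1 {A : Set ℕ} {te : TimeEdge} : te ∈ induced T1 A ↔
    (te = (s(0,1),2) ∧ 0 ∈ A ∧ 1 ∈ A) ∨ (te = (s(0,2),1) ∧ 0 ∈ A ∧ 2 ∈ A) ∨
    (te = (s(1,2),1) ∧ 1 ∈ A ∧ 2 ∈ A) := by
  constructor
  · rintro ⟨hte, hA⟩
    rcases hte with rfl | rfl | rfl
    · exact Or.inl ⟨rfl, hA 0 (by decide), hA 1 (by decide)⟩
    · exact Or.inr (Or.inl ⟨rfl, hA 0 (by decide), hA 2 (by decide)⟩)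
    · exact Or.inr (Or.inr ⟨rfl, hA 1 (by decide), hA 2 (by decide)⟩)
  · rintro (⟨rfl, ha, hb⟩ | ⟨rfl, ha, hb⟩ | ⟨rfl, ha, hb⟩) <;>
      refine ⟨by simp [T1], fun v hv => ?_⟩ <;>
      rw [Sym2.mem_iff] at hv <;> rcases hv with rfl | rfl <;> assumption

lemma mem_induced_T2 {Δ₂ : ℕ} {A : Set ℕ} {te : TimeEdge} : te ∈ induced (T2 Δ₂) A ↔
    (te = (s(2,3),Δ₂+2) ∧ 2 ∈ A ∧ 3 ∈ A) ∨ (te = (s(2,4),Δ₂+2) ∧ 2 ∈ A ∧ 4 ∈ A) ∨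
    (te = (s(3,4),Δ₂+1) ∧ 3 ∈ A ∧ 4 ∈ A) := by
  constructor
  · rintro ⟨hte, hA⟩
    rcases hte with rfl | rfl | rfl
    · exact Or.inl ⟨rfl, hA 2 (by simp), hA 3 (by simp)⟩
    · exact Or.inr (Or.inl ⟨rfl, hA 2 (by simp), hA 4 (by simp)⟩)
    · exact Or.inr (Or.inr ⟨rfl, hA 3 (by simp), hA 4 (by simp)⟩)
  · rintro (⟨rfl, ha, hb⟩ | ⟨rfl, ha, hb⟩ | ⟨rfl, ha, hb⟩) <;>
      refine ⟨by simp [T2], fun v hv => ?_⟩ <;>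
      rw [Sym2.mem_iff] at hv <;> rcases hv with rfl | rfl <;> assumption

lemma clique_induced_T1 {Δ₁ : ℕ} (h : 2 ≤ Δ₁) (A : Set ℕ) :
    IsTemporalClique Δ₁ (induced T1 A) := by
  by_cases hall : 0 ∈ A ∧ 1 ∈ A ∧ 2 ∈ A
  · have heq : induced T1 A = T1 := by
      apply Set.Subset.antisymm (fun te hte => hte.1)
      intro te hte
      refine ⟨hte, fun v hv => ?_⟩
      rcases hte with rfl | rfl | rfl <;> rw [Sym2.mem_iff] at hv <;>
        rcases hv with rfl | rfl <;> tauto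
    rw [heq]; exact clique_T1 h
  · apply clique_subsingleton (by omega)
    intro te₁ h₁ te₂ h₂
    rw [mem_induced_T1] at h₁ h₂
    rcases h₁ with ⟨rfl, ha, hb⟩ | ⟨rfl, ha, hb⟩ | ⟨rfl, ha, hb⟩ <;>
      rcases h₂ with ⟨rfl, hc, hd⟩ | ⟨rfl, hc, hd⟩ | ⟨rfl, hc, hd⟩ <;>
      first | rfl | (exact absurd ⟨by assumption, by assumption, by assumption⟩ hall)

lemma clique_induced_T2 {Δ₁ Δ₂ : ℕ} (h : 2 ≤ Δ₁) (A : Set ℕ) :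
    IsTemporalClique Δ₁ (induced (T2 Δ₂) A) := by
  by_cases hall : 2 ∈ A ∧ 3 ∈ A ∧ 4 ∈ A
  · have heq : induced (T2 Δ₂) A = T2 Δ₂ := by
      apply Set.Subset.antisymm (fun te hte => hte.1)
      intro te hte
      refine ⟨hte, fun v hv => ?_⟩
      rcases hte with rfl | rfl | rfl <;> rw [Sym2.mem_iff] at hv <;>
        rcases hv with rfl | rfl <;> tauto
    rw [heq]; exact clique_T2 h
  · apply clique_subsingleton (by omega)
    intro te₁ h₁ te₂ h₂
    rw [mem_induced_T2] at h₁ h₂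
    rcases h₁ with ⟨rfl, ha, hb⟩ | ⟨rfl, ha, hb⟩ | ⟨rfl, ha, hb⟩ <;>
      rcases h₂ with ⟨rfl, hc, hd⟩ | ⟨rfl, hc, hd⟩ | ⟨rfl, hc, hd⟩ <;>
      first | rfl | (exact absurd ⟨by assumption, by assumption, by assumption⟩ hall)

lemma dist_helper {s t Δ : ℕ} (h : s + Δ ≤ t) : Δ ≤ max s t - min s t := by
  rw [max_eq_right (by omega : s ≤ t), min_eq_left (by omega : s ≤ t)]; omega

lemma verts_mono {X Y : Set TimeEdge} (h : X ⊆ Y) : verts X ⊆ verts Y := by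
  rintro v ⟨te, hte, hv⟩; exact ⟨te, h hte, hv⟩

lemma times_mono {X Y : Set TimeEdge} (h : X ⊆ Y) : times X ⊆ times Y :=
  Set.image_mono h

lemma indep_induced {Δ₂ : ℕ} {X Y : Set TimeEdge} (hX : X ⊆ T1) (hY : Y ⊆ T2 Δ₂)
    (hnot : ¬((s(0,1),2) ∈ X ∧ (s(3,4),Δ₂+1) ∈ Y ∧ (2:ℕ) ∈ verts X ∧ (2:ℕ) ∈ verts Y)) :
    Indep Δ₂ X Y := by
  by_cases hvx : (2:ℕ) ∈ verts X
  · by_cases hvy : (2:ℕ) ∈ verts Y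
    · have hcross : ¬((s(0,1),2) ∈ X ∧ (s(3,4),Δ₂+1) ∈ Y) :=
        fun ⟨a, b⟩ => hnot ⟨a, b, hvx, hvy⟩
      right
      have hXne : X.Nonempty := by obtain ⟨te, hte, -⟩ := hvx; exact ⟨te, hte⟩
      have hYne : Y.Nonempty := by obtain ⟨te, hte, -⟩ := hvy; exact ⟨te, hte⟩
      by_cases hx1 : (s(0,1),2) ∈ X
      · have hy3 : (s(3,4),Δ₂+1) ∉ Y := fun h => hcross ⟨hx1, h⟩
        have htY : ∀ t ∈ times Y, Δ₂+2 ≤ t ∧ t ≤ Δ₂+2 := by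
          rintro t ⟨te, hte, rfl⟩
          rcases hY hte with rfl | rfl | rfl
          · omega
          · omega
          · exact absurd hte hy3
        intro s hs t ht
        have hsb := lifetime_bounds hXne (fun t ht => times_T1 (times_mono hX ht)) s hs
        have htb := lifetime_bounds hYne htY t ht
        exact dist_helper (by omega)
      · have htX : ∀ t ∈ times X, 1 ≤ t ∧ t ≤ 1 := by
          rintro t ⟨te, hte, rfl⟩
          rcases hX hte with rfl | rfl | rfl
          · exact absurd hte hx1
          · omega
          · omega
        intro s hs t ht
        have hsb := lifetime_bounds hXne htX s hs
        have htb := lifetime_bounds hYne (fun t ht => times_T2 (times_mono hY ht)) t ht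
        exact dist_helper (by omega)
    · left
      rw [Set.disjoint_left]
      intro v hvX hvY
      have h1 := mem_verts_T1.1 (verts_mono hX hvX)
      have h2 := mem_verts_T2.1 (verts_mono hY hvY)
      have : v = 2 := by omega
      subst this
      exact hvy hvY
  · left
    rw [Set.disjoint_left]
    intro v hvX hvY
    have h1 := mem_verts_T1.1 (verts_mono hX hvX)
    have h2 := mem_verts_T2.1 (verts_mono hY hvY)
    have : v = 2 := by omega
    subst this
    exact hvx hvX

lemma lifetime_single {K : Set TimeEdge} {te0 : TimeEdge} (h0 : te0 ∈ K)
    (h : ∀ te ∈ K, te = te0) : te0.2 ∈ lifetime K := by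
  have h1 : te0.2 ∈ times K := mem_times' h0
  have hb : ∀ x ∈ times K, te0.2 ≤ x ∧ x ≤ te0.2 := by
    rintro x ⟨te, hte, rfl⟩; rw [h te hte]; omega
  exact ⟨(sInf_eq' h1 fun x hx => (hb x hx).1).le, (sSup_eq' h1 fun x hx => (hb x hx).2).ge⟩

lemma induced_union {S T : Set TimeEdge} {A : Set ℕ} :
    induced (S ∪ T) A = induced S A ∪ induced T A := by
  ext te; simp only [induced, Set.mem_union, Set.mem_setOf_eq]; tauto

lemma induced_subset {S : Set TimeEdge} {A : Set ℕ} : induced S A ⊆ S :=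
  fun _ h => h.1

theorem counterexample_four_vertices (Δ₁ Δ₂ : ℕ) (h1 : 1 < Δ₁) (h2 : Δ₁ < Δ₂)
    (E : Set TimeEdge)
    (hE : E = {(s(0, 1), 2), (s(0, 2), 1), (s(1, 2), 1),
               (s(2, 3), Δ₂ + 2), (s(2, 4), Δ₂ + 2), (s(3, 4), Δ₂ + 1)}) :
    ¬ IsClusterTemporalGraph Δ₁ Δ₂ E ∧
      ∀ A : Set ℕ, A.Finite → A.ncard ≤ 4 →
        IsClusterTemporalGraph Δ₁ Δ₂ (induced E A) := by
  have hE' : E = T1 ∪ T2 Δ₂ := by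
    rw [hE]; ext te
    simp only [T1, T2, Set.mem_union, Set.mem_insert_iff, Set.mem_singleton_iff]
    tauto
  constructor
  · rintro ⟨P, hU, hdisj, hcl, hpw⟩
    have hsubE : ∀ K ∈ P, K ⊆ E := fun K hK => hU ▸ Set.subset_sUnion_of_mem hK
    have hno : ∀ x y : ℕ, (x = 0 ∨ x = 1) → (y = 3 ∨ y = 4) → ∀ t, (s(x,y), t) ∉ E := by
      rintro x y (rfl | rfl) (rfl | rfl) t ht <;> rw [hE] at ht <;>
        rcases ht with h | h | h | h | h | h <;> simp [Prod.ext_iff, Sym2.eq_iff] at h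
    have cross : ∀ K ∈ P, ∀ te₁ ∈ K, ∀ te₂ ∈ K, ∀ x, x ∈ te₁.1 → ∀ y, y ∈ te₂.1 →
        (x = 0 ∨ x = 1) → (y = 3 ∨ y = 4) → False := by
      intro K hK te₁ h₁ te₂ h₂ x hx y hy hx' hy'
      obtain ⟨t, ht⟩ := clique_exists_edge (hcl K hK) ⟨te₁, h₁, hx⟩ ⟨te₂, h₂, hy⟩ (by omega)
      exact hno x y hx' hy' t (hsubE K hK ht)
    have edgeK : ∀ K ∈ P, ∀ x ∈ verts K, ∀ y ∈ verts K, x ≠ y → ∃ t, (s(x,y),t) ∈ K :=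
      fun K hK x hx y hy hxy => clique_exists_edge (hcl K hK) hx hy hxy
    have side1 : ∀ K ∈ P, ∀ te ∈ K, (0 ∈ te.1 ∨ 1 ∈ te.1) → ∀ te' ∈ K,
        te' = (s(0,1),2) ∨ te' = (s(0,2),1) ∨ te' = (s(1,2),1) := by
      intro K hK te hte hor te' hte'
      have h6 := hsubE K hK hte'
      rw [hE] at h6
      rcases h6 with rfl | rfl | rfl | rfl | rfl | rfl
      · exact Or.inl rfl
      · exact Or.inr (Or.inl rfl)
      · exact Or.inr (Or.inr rfl)
      · rcases hor with h | h <;>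
          exact (cross K hK te hte _ hte' _ h 3 (by simp) (by tauto) (by tauto)).elim
      · rcases hor with h | h <;>
          exact (cross K hK te hte _ hte' _ h 4 (by simp) (by tauto) (by tauto)).elim
      · rcases hor with h | h <;>
          exact (cross K hK te hte _ hte' _ h 3 (by simp) (by tauto) (by tauto)).elim
    have side2 : ∀ K ∈ P, ∀ te ∈ K, (3 ∈ te.1 ∨ 4 ∈ te.1) → ∀ te' ∈ K,
        te' = (s(2,3),Δ₂+2) ∨ te' = (s(2,4),Δ₂+2) ∨ te' = (s(3,4),Δ₂+1) := by
      intro K hK te hte hor te' hte'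
      have h6 := hsubE K hK hte'
      rw [hE] at h6
      rcases h6 with rfl | rfl | rfl | rfl | rfl | rfl
      · rcases hor with h | h <;>
          exact (cross K hK _ hte' te hte 0 (by simp) _ h (by tauto) (by tauto)).elim
      · rcases hor with h | h <;>
          exact (cross K hK _ hte' te hte 0 (by simp) _ h (by tauto) (by tauto)).elim
      · rcases hor with h | h <;>
          exact (cross K hK _ hte' te hte 1 (by simp) _ h (by tauto) (by tauto)).elim
      · exact Or.inl rfl
      · exact Or.inr (Or.inl rfl)
      · exact Or.inr (Or.inr rfl)
    -- the part containing (s(0,1),2)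
    obtain ⟨K1, hK1P, he1K1⟩ : ∃ K ∈ P, (s(0,1),2) ∈ K :=
      Set.mem_sUnion.mp (by rw [hU, hE]; left; rfl)
    have hK1sub := side1 K1 hK1P _ he1K1 (Or.inl (by simp))
    -- (s(0,2),1) ∈ K1
    have he2K1 : (s(0,2),1) ∈ K1 := by
      by_contra he2
      obtain ⟨K3, hK3P, he2K3⟩ : ∃ K ∈ P, (s(0,2),1) ∈ K :=
        Set.mem_sUnion.mp (by rw [hU, hE]; right; left; rfl)
      have hne31 : K3 ≠ K1 := fun h => he2 (h ▸ he2K3)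
      have he1K3 : (s(0,1),2) ∉ K3 := fun h =>
        (Set.disjoint_left.mp (hdisj hK3P hK1P hne31) h) he1K1
      have hK3sub := side1 K3 hK3P _ he2K3 (Or.inl (by simp))
      have he3K3 : (s(1,2),1) ∉ K3 := by
        intro he3
        obtain ⟨t, ht⟩ := edgeK K3 hK3P 0 ⟨_, he2K3, by simp⟩ 1 ⟨_, he3, by simp⟩ (by omega)
        rcases hK3sub _ ht with h | h | h
        · rw [h] at ht; exact he1K3 ht
        · simp [Prod.ext_iff, Sym2.eq_iff] at h
        · simp [Prod.ext_iff, Sym2.eq_iff] at h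
      have hK3only : ∀ te ∈ K3, te = (s(0,2),1) := by
        intro te hte
        rcases hK3sub te hte with rfl | rfl | rfl
        · exact absurd hte he1K3
        · rfl
        · exact absurd hte he3K3
      obtain ⟨K4, hK4P, he3K4⟩ : ∃ K ∈ P, (s(1,2),1) ∈ K :=
        Set.mem_sUnion.mp (by rw [hU, hE]; right; right; left; rfl)
      by_cases hK41 : K4 = K1
      · subst hK41
        have hK4sub := side1 K4 hK1P _ he1K1 (Or.inl (by simp))
        obtain ⟨t, ht⟩ := edgeK K4 hK1P 0 ⟨_, he1K1, by simp⟩ 2 ⟨_, he3K4, by simp⟩ (by omega)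
        rcases hK4sub _ ht with h | h | h
        · simp [Prod.ext_iff, Sym2.eq_iff] at h
        · rw [h] at ht; exact he2 ht
        · simp [Prod.ext_iff, Sym2.eq_iff] at h
      · have he1K4 : (s(0,1),2) ∉ K4 := fun h =>
          (Set.disjoint_left.mp (hdisj hK4P hK1P hK41) h) he1K1
        have hne43 : K4 ≠ K3 := fun h => he3K3 (h ▸ he3K4)
        have he2K4 : (s(0,2),1) ∉ K4 := fun h =>
          (Set.disjoint_left.mp (hdisj hK4P hK3P hne43) h) he2K3
        have hK4only : ∀ te ∈ K4, te = (s(1,2),1) := by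
          intro te hte
          rcases side1 K4 hK4P _ he3K4 (Or.inr (by simp)) te hte with rfl | rfl | rfl
          · exact absurd hte he1K4
          · exact absurd hte he2K4
          · rfl
        have hind := hpw hK3P hK4P (fun h => he2K4 (h ▸ he2K3))
        rcases hind with hd | hd
        · exact Set.disjoint_left.mp hd (show (2:ℕ) ∈ verts K3 from ⟨_, he2K3, by simp⟩) (show (2:ℕ) ∈ verts K4 from ⟨_, he3K4, by simp⟩)
        · have := hd 1 (lifetime_single he2K3 hK3only) 1 (lifetime_single he3K4 hK4only)
          simp at this; omega
    -- (s(1,2),1) ∈ K1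
    have he3K1 : (s(1,2),1) ∈ K1 := by
      obtain ⟨t, ht⟩ := edgeK K1 hK1P 1 ⟨_, he1K1, by simp⟩ 2 ⟨_, he2K1, by simp⟩ (by omega)
      rcases hK1sub _ ht with h | h | h
      · simp [Prod.ext_iff, Sym2.eq_iff] at h
      · simp [Prod.ext_iff, Sym2.eq_iff] at h
      · rw [h] at ht; exact ht
    -- the part containing (s(3,4),Δ₂+1)
    obtain ⟨K2, hK2P, hf3K2⟩ : ∃ K ∈ P, (s(3,4),Δ₂+1) ∈ K :=
      Set.mem_sUnion.mp (by rw [hU, hE]; right; right; right; right; right; rfl)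
    have hK2sub := side2 K2 hK2P _ hf3K2 (Or.inl (by simp))
    have hf1K2 : (s(2,3),Δ₂+2) ∈ K2 := by
      by_contra hf1
      obtain ⟨K5, hK5P, hf1K5⟩ : ∃ K ∈ P, (s(2,3),Δ₂+2) ∈ K :=
        Set.mem_sUnion.mp (by rw [hU, hE]; right; right; right; left; rfl)
      have hne52 : K5 ≠ K2 := fun h => hf1 (h ▸ hf1K5)
      have hf3K5 : (s(3,4),Δ₂+1) ∉ K5 := fun h =>
        (Set.disjoint_left.mp (hdisj hK5P hK2P hne52) h) hf3K2
      have hK5sub := side2 K5 hK5P _ hf1K5 (Or.inl (by simp))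
      have hf2K5 : (s(2,4),Δ₂+2) ∉ K5 := by
        intro hf2
        obtain ⟨t, ht⟩ := edgeK K5 hK5P 3 ⟨_, hf1K5, by simp⟩ 4 ⟨_, hf2, by simp⟩ (by omega)
        rcases hK5sub _ ht with h | h | h
        · simp [Prod.ext_iff, Sym2.eq_iff] at h
        · simp [Prod.ext_iff, Sym2.eq_iff] at h
        · rw [h] at ht; exact hf3K5 ht
      have hK5only : ∀ te ∈ K5, te = (s(2,3),Δ₂+2) := by
        intro te hte
        rcases hK5sub te hte with rfl | rfl | rfl
        · rfl
        · exact absurd hte hf2K5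
        · exact absurd hte hf3K5
      obtain ⟨K6, hK6P, hf2K6⟩ : ∃ K ∈ P, (s(2,4),Δ₂+2) ∈ K :=
        Set.mem_sUnion.mp (by rw [hU, hE]; right; right; right; right; left; rfl)
      by_cases hK62 : K6 = K2
      · subst hK62
        obtain ⟨t, ht⟩ := edgeK K6 hK2P 2 ⟨_, hf2K6, by simp⟩ 3 ⟨_, hf3K2, by simp⟩ (by omega)
        rcases hK2sub _ ht with h | h | h
        · rw [h] at ht; exact hf1 ht
        · simp [Prod.ext_iff, Sym2.eq_iff] at h
        · simp [Prod.ext_iff, Sym2.eq_iff] at h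
      · have hf3K6 : (s(3,4),Δ₂+1) ∉ K6 := fun h =>
          (Set.disjoint_left.mp (hdisj hK6P hK2P hK62) h) hf3K2
        have hne65 : K6 ≠ K5 := fun h => hf2K5 (h ▸ hf2K6)
        have hf1K6 : (s(2,3),Δ₂+2) ∉ K6 := fun h =>
          (Set.disjoint_left.mp (hdisj hK6P hK5P hne65) h) hf1K5
        have hK6only : ∀ te ∈ K6, te = (s(2,4),Δ₂+2) := by
          intro te hte
          rcases side2 K6 hK6P _ hf2K6 (Or.inr (by simp)) te hte with rfl | rfl | rfl
          · exact absurd hte hf1K6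
          · rfl
          · exact absurd hte hf3K6
        have hind := hpw hK5P hK6P hne65.symm
        rcases hind with hd | hd
        · exact Set.disjoint_left.mp hd (show (2:ℕ) ∈ verts K5 from ⟨_, hf1K5, by simp⟩) (show (2:ℕ) ∈ verts K6 from ⟨_, hf2K6, by simp⟩)
        · have := hd (Δ₂+2) (lifetime_single hf1K5 hK5only)
            (Δ₂+2) (lifetime_single hf2K6 hK6only)
          simp at this; omega
    -- final contradiction between K1 and K2
    have hne12 : K1 ≠ K2 := by
      intro h
      exact cross K1 hK1P _ he1K1 _ (show (s(3,4),Δ₂+1) ∈ K1 by rw [h]; exact hf3K2)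
        0 (by simp) 3 (by simp) (by tauto) (by tauto)
    have h2mem : (2:ℕ) ∈ times K1 := mem_times' he1K1
    have hK1bound : ∀ x ∈ times K1, x ≤ 2 := by
      rintro x ⟨te, hte, rfl⟩
      rcases hK1sub te hte with rfl | rfl | rfl <;> omega
    have h2life : (2:ℕ) ∈ lifetime K1 :=
      ⟨Nat.sInf_le h2mem, (sSup_eq' h2mem hK1bound).ge⟩
    have hdmem : (Δ₂+1 : ℕ) ∈ times K2 := mem_times' hf3K2
    have hK2bound : ∀ x ∈ times K2, Δ₂+1 ≤ x ∧ x ≤ Δ₂+2 := by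
      rintro x ⟨te, hte, rfl⟩
      rcases hK2sub te hte with rfl | rfl | rfl <;> omega
    have hdlife : (Δ₂+1 : ℕ) ∈ lifetime K2 :=
      ⟨(sInf_eq' hdmem fun x hx => (hK2bound x hx).1).le,
        le_csSup ⟨Δ₂+2, fun x hx => (hK2bound x hx).2⟩ hdmem⟩
    rcases hpw hK1P hK2P hne12 with hd | hd
    · exact Set.disjoint_left.mp hd (show (2:ℕ) ∈ verts K1 from ⟨_, he2K1, by simp⟩) (show (2:ℕ) ∈ verts K2 from ⟨_, hf1K2, by simp⟩)
    · have := hd 2 h2life (Δ₂+1) hdlife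
      rw [max_eq_right (by omega), min_eq_left (by omega)] at this
      omega
  · -- positive part
    intro A hfin hcard
    refine ⟨{induced T1 A, induced (T2 Δ₂) A}, ?_, ?_, ?_, ?_⟩
    · rw [Set.sUnion_pair, hE', induced_union]
    · have hd : Disjoint (induced T1 A) (induced (T2 Δ₂) A) := by
        rw [Set.disjoint_left]
        rintro te h1 h2
        rcases mem_induced_T1.1 h1 with ⟨rfl, -⟩ | ⟨rfl, -⟩ | ⟨rfl, -⟩ <;>
          rcases mem_induced_T2.1 h2 with ⟨h, -⟩ | ⟨h, -⟩ | ⟨h, -⟩ <;>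
          simp [Prod.ext_iff, Sym2.eq_iff] at h
      rintro a (rfl | rfl) b (rfl | rfl) hab
      · exact absurd rfl hab
      · exact hd
      · exact hd.symm
      · exact absurd rfl hab
    · rintro K (rfl | rfl)
      · exact clique_induced_T1 (by omega) A
      · exact clique_induced_T2 (by omega) A
    · have hnot : ¬((s(0,1),2) ∈ induced T1 A ∧ (s(3,4),Δ₂+1) ∈ induced (T2 Δ₂) A ∧
          (2:ℕ) ∈ verts (induced T1 A) ∧ (2:ℕ) ∈ verts (induced (T2 Δ₂) A)) := by
        rintro ⟨hX1, hY3, hvX, -⟩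
        have h01 : 0 ∈ A ∧ 1 ∈ A := by
          rcases mem_induced_T1.1 hX1 with ⟨-, h⟩ | ⟨h, -⟩ | ⟨h, -⟩
          · exact h
          · simp [Prod.ext_iff, Sym2.eq_iff] at h
          · simp [Prod.ext_iff, Sym2.eq_iff] at h
        have h34 : 3 ∈ A ∧ 4 ∈ A := by
          rcases mem_induced_T2.1 hY3 with ⟨h, -⟩ | ⟨h, -⟩ | ⟨-, h⟩
          · simp [Prod.ext_iff, Sym2.eq_iff] at h
          · simp [Prod.ext_iff, Sym2.eq_iff] at h
          · exact h
        have h2A : 2 ∈ A := by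
          obtain ⟨te, hte, h2te⟩ := hvX
          exact hte.2 2 h2te
        have hsub : ({0,1,2,3,4} : Set ℕ) ⊆ A := by
          intro v hv
          simp only [Set.mem_insert_iff, Set.mem_singleton_iff] at hv
          rcases hv with rfl | rfl | rfl | rfl | rfl
          · exact h01.1
          · exact h01.2
          · exact h2A
          · exact h34.1
          · exact h34.2
        have h5 : ({0,1,2,3,4} : Set ℕ).ncard = 5 := by
          rw [show ({0,1,2,3,4}:Set ℕ) = ↑({0,1,2,3,4}:Finset ℕ) by simp,
            Set.ncard_coe_finset]
          decide
        have := Set.ncard_le_ncard hsub hfin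
        omega
      have hind : Indep Δ₂ (induced T1 A) (induced (T2 Δ₂) A) :=
        indep_induced induced_subset induced_subset hnot
      rintro a (rfl | rfl) b (rfl | rfl) hab
      · exact absurd rfl hab
      · exact hind
      · exact indep_symm hind
      · exact absurd rfl hab
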